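/- Let Σ₁, Σ₂ be positive definite N × N matrices satisfying: for some i, j, |(Σ₁)_{ij} - (Σ₂)_{ij}| ≥ δ·((Σ₁)_{ii} + (Σ₁)_{jj} + (Σ₂)_{ii} + (Σ₂)_{jj}). Then for all ε ∈ [0,1], log det((1-ε)Σ₁ + εΣ₂) ≥ (1-ε)·log det(Σ₁) + ε·log det(Σ₂) + c·ε·(1-ε)·δ² for a universal constant c > 0. -/

import Mathlib

open Matrix BigOperators Finset

variable {N : ℕ}



/-- `log` is strongly concave on `(0, M]`. -/
lemma log_strong_concave_aux {M : ℝ} (hM : 0 < M) :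
    ConcaveOn ℝ (Set.Ioc 0 M) (fun x => Real.log x + x ^ 2 / (2 * M ^ 2)) := by
  apply concaveOn_of_hasDerivWithinAt2_nonpos (f' := fun x => x⁻¹ + x / M ^ 2)
    (f'' := fun x => -(x ^ 2)⁻¹ + (M ^ 2)⁻¹) (convex_Ioc 0 M)
  · apply ContinuousOn.add
    · exact Real.continuousOn_log.mono (fun x hx => ne_of_gt hx.1)
    · fun_prop
  · intro x hx
    rw [interior_Ioc] at hx
    have hx0 : x ≠ 0 := ne_of_gt hx.1
    have : HasDerivAt (fun x : ℝ => Real.log x + x ^ 2 / (2 * M ^ 2)) (x⁻¹ + x / M ^ 2) x := by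
      have h1 := Real.hasDerivAt_log hx0
      have h2 : HasDerivAt (fun x : ℝ => x ^ 2 / (2 * M ^ 2)) (x / M ^ 2) x := by
        have := (hasDerivAt_pow 2 x).div_const (2 * M ^ 2)
        exact this.congr_deriv (by ring)
      exact h1.add h2
    exact this.hasDerivWithinAt
  · intro x hx
    rw [interior_Ioc] at hx
    have hx0 : x ≠ 0 := ne_of_gt hx.1
    have : HasDerivAt (fun x : ℝ => x⁻¹ + x / M ^ 2) (-(x ^ 2)⁻¹ + (M ^ 2)⁻¹) x := by
      have h1 := hasDerivAt_inv hx0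
      have h2 : HasDerivAt (fun x : ℝ => x / M ^ 2) ((M ^ 2)⁻¹) x := by
        simpa [div_eq_mul_inv] using (hasDerivAt_id x).mul_const (M ^ 2)⁻¹
      exact h1.add h2
    exact this.hasDerivWithinAt
  · intro x hx
    rw [interior_Ioc] at hx
    have h1 : (M ^ 2)⁻¹ ≤ (x ^ 2)⁻¹ := by
      apply inv_anti₀ (pow_pos hx.1 2)
      exact pow_le_pow_left₀ hx.1.le hx.2.le 2
    linarith

lemma log_gap {x y ε : ℝ} (hx : 0 < x) (hy : 0 < y) (hε0 : 0 ≤ ε) (hε1 : ε ≤ 1) :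
    (1 - ε) * Real.log x + ε * Real.log y
        + ε * (1 - ε) * (x - y) ^ 2 / (2 * max x y ^ 2)
      ≤ Real.log ((1 - ε) * x + ε * y) := by
  set M := max x y with hM
  have hMpos : 0 < M := lt_max_of_lt_left hx
  have hxm : x ∈ Set.Ioc 0 M := ⟨hx, le_max_left _ _⟩
  have hym : y ∈ Set.Ioc 0 M := ⟨hy, le_max_right _ _⟩
  have h := (log_strong_concave_aux hMpos).2 hxm hym (by linarith : (0:ℝ) ≤ 1 - ε) hε0
    (by ring)
  simp only [smul_eq_mul] at h
  have e : ε * (1 - ε) * (x - y) ^ 2 / (2 * M ^ 2)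
      = (1 - ε) * (x ^ 2 / (2 * M ^ 2)) + ε * (y ^ 2 / (2 * M ^ 2))
        - ((1 - ε) * x + ε * y) ^ 2 / (2 * M ^ 2) := by
    have : M ^ 2 ≠ 0 := by positivity
    field_simp
    ring
  linarith [h]

lemma log_gap_min {l ε : ℝ} (hl : 0 < l) (hε0 : 0 ≤ ε) (hε1 : ε ≤ 1) :
    ε * Real.log l + (1/8) * (ε * (1 - ε) * min ((l - 1) ^ 2) 1)
      ≤ Real.log ((1 - ε) * 1 + ε * l) := by
  have h := log_gap one_pos hl hε0 hε1
  simp only [Real.log_one, mul_zero, zero_add] at h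
  have hmin0 : 0 ≤ min ((l - 1) ^ 2) 1 := le_min (sq_nonneg _) zero_le_one
  have key : (1/8) * min ((l - 1) ^ 2) 1 ≤ (1 - l) ^ 2 / (2 * max 1 l ^ 2) := by
    rcases le_total l 1 with h1 | h1
    · have hm : max 1 l = 1 := max_eq_left h1
      rw [hm]
      have hmin : min ((l - 1) ^ 2) 1 ≤ (l - 1) ^ 2 := min_le_left _ _
      nlinarith
    · have hmax : max 1 l = l := max_eq_right h1
      rw [hmax]
      rw [le_div_iff₀ (by positivity)]
      rcases le_total l 2 with h2 | h2
      · have hmin : min ((l - 1) ^ 2) 1 ≤ (l - 1) ^ 2 := min_le_left _ _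
        have hl2 : 2 * l ^ 2 ≤ 8 := by nlinarith
        nlinarith [mul_le_mul hmin hl2 (by positivity) (sq_nonneg (l - 1))]
      · have hmin : min ((l - 1) ^ 2) 1 ≤ 1 := min_le_right _ _
        nlinarith
  have hεε : 0 ≤ ε * (1 - ε) := mul_nonneg hε0 (by linarith)
  have h2 := mul_le_mul_of_nonneg_left key hεε
  rw [mul_div_assoc] at h
  calc ε * Real.log l + (1/8) * (ε * (1 - ε) * min ((l - 1) ^ 2) 1)
      = ε * Real.log l + ε * (1 - ε) * (1/8 * min ((l - 1) ^ 2) 1) := by ring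
    _ ≤ ε * Real.log l + ε * (1 - ε) * ((1 - l) ^ 2 / (2 * max 1 l ^ 2)) := by linarith
    _ ≤ _ := h


open Matrix BigOperators Finset

variable {N : ℕ}

lemma psd_det_nonneg {n : Type*} [Fintype n] [DecidableEq n] {A : Matrix n n ℝ}
    (hA : A.PosSemidef) : 0 ≤ A.det := by
  rw [hA.isHermitian.det_eq_prod_eigenvalues]
  exact Finset.prod_nonneg fun k _ => by simpa using hA.eigenvalues_nonneg k

lemma posdef_diag_pos {A : Matrix (Fin N) (Fin N) ℝ} (hA : A.PosDef) (i : Fin N) :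
    0 < A i i := by
  have hne : (Pi.single i 1 : Fin N → ℝ) ≠ 0 := fun h => by
    have := congr_fun h i
    simp at this
  have h := hA.dotProduct_mulVec_pos hne
  simpa [Matrix.mulVec_single, single_dotProduct] using h

lemma posdef_entry_sq {A : Matrix (Fin N) (Fin N) ℝ} (hA : A.PosDef) (i j : Fin N) :
    (A i j) ^ 2 ≤ A i i * A j j := by
  have h := psd_det_nonneg (hA.posSemidef.submatrix ![i, j])
  rw [Matrix.det_fin_two] at h
  have hsym : A j i = A i j := by
    have := hA.isHermitian.apply j i
    simpa using this.symm
  simp only [Matrix.submatrix_apply] at h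
  simp only [Matrix.cons_val_zero, Matrix.cons_val_one, Matrix.head_cons] at h
  rw [hsym] at h
  nlinarith [h]

lemma min_sum_le {t : Fin N → ℝ} (ht : ∀ k, 0 ≤ t k) :
    min (∑ k, t k) 1 ≤ ∑ k, min (t k) 1 := by
  by_cases h : ∀ k, t k ≤ 1
  · have e : ∑ k, min (t k) 1 = ∑ k, t k :=
      Finset.sum_congr rfl fun k _ => min_eq_left (h k)
    rw [e]; exact min_le_left _ _
  · push_neg at h
    obtain ⟨k, hk⟩ := h
    refine le_trans (min_le_right _ _) ?_
    have h1 := Finset.single_le_sum (f := fun k' => min (t k') 1)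
      (fun k' _ => le_min (ht k') zero_le_one) (Finset.mem_univ k)
    simp only [min_eq_right hk.le] at h1
    exact h1




open scoped MatrixOrder in
lemma whitening {A B : Matrix (Fin N) (Fin N) ℝ} (hA : A.PosDef) (hB : B.PosDef) :
    ∃ l : Fin N → ℝ, (∀ k, 0 < l k) ∧
      (∀ ε : ℝ, ((1-ε) • A + ε • B).det = A.det * ∏ k, ((1-ε) + ε * l k)) ∧
      (B.det = A.det * ∏ k, l k) ∧
      (∀ i j : Fin N, (A i j - B i j) ^ 2 ≤ (∑ k, (l k - 1) ^ 2) * (A i i * A j j)) := by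
  classical
  set S := CFC.sqrt A with hSdef
  have hS : S.PosSemidef := (CFC.sqrt_nonneg A).posSemidef
  have hSH : S.IsHermitian := hS.isHermitian
  have hSS : S * S = A := CFC.sqrt_mul_sqrt_self A hA.posSemidef.nonneg
  have hdetA : 0 < A.det := hA.det_pos
  have hdetS : IsUnit S.det := by
    rw [isUnit_iff_ne_zero]
    intro h
    rw [← hSS, Matrix.det_mul, h, mul_zero] at hdetA
    exact lt_irrefl _ hdetA
  have hSiS : S⁻¹ * S = 1 := Matrix.nonsing_inv_mul S hdetS
  have hSSi : S * S⁻¹ = 1 := Matrix.mul_nonsing_inv S hdetS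
  have hSiH : S⁻¹.IsHermitian := hSH.inv
  set C := S⁻¹ * B * S⁻¹ with hCdef
  have hCH : C.IsHermitian := by
    show Cᴴ = C
    rw [hCdef, Matrix.conjTranspose_mul, Matrix.conjTranspose_mul, hSiH.eq,
      hB.isHermitian.eq, Matrix.mul_assoc]
  have hSCS : S * C * S = B := by
    rw [hCdef, ← Matrix.mul_assoc, ← Matrix.mul_assoc, hSSi, Matrix.one_mul,
      Matrix.mul_assoc, hSiS, Matrix.mul_one]
  have hCpd : C.PosDef := by
    refine Matrix.PosDef.of_dotProduct_mulVec_pos hCH fun x hx => ?_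
    have hy : S⁻¹ *ᵥ x ≠ 0 := by
      intro h
      apply hx
      have : S *ᵥ (S⁻¹ *ᵥ x) = x := by
        rw [Matrix.mulVec_mulVec, hSSi, Matrix.one_mulVec]
      rw [h, Matrix.mulVec_zero] at this
      exact this.symm
    have h := hB.dotProduct_mulVec_pos hy
    have e : star (S⁻¹ *ᵥ x) ⬝ᵥ (B *ᵥ (S⁻¹ *ᵥ x)) = star x ⬝ᵥ (C *ᵥ x) := by
      rw [Matrix.star_mulVec, hSiH.eq, Matrix.mulVec_mulVec, hCdef]
      rw [Matrix.dotProduct_mulVec, Matrix.dotProduct_mulVec, Matrix.vecMul_vecMul,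
        Matrix.mul_assoc]
    rwa [e] at h
  set l := hCH.eigenvalues with hldef
  have hlpos : ∀ k, 0 < l k := fun k => hCpd.eigenvalues_pos k
  set V : Matrix (Fin N) (Fin N) ℝ := ↑(hCH.eigenvectorUnitary) with hVdef
  have hV1 : V * star V = 1 := Matrix.mem_unitaryGroup_iff.mp hCH.eigenvectorUnitary.2
  have hV2 : star V * V = 1 := Matrix.mem_unitaryGroup_iff'.mp hCH.eigenvectorUnitary.2
  have hdiag : star V * C * V = Matrix.diagonal l := by
    have := hCH.conjStarAlgAut_star_eigenvectorUnitary
    simpa [Unitary.conjStarAlgAut_star_apply] using this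
  have hdVV : V.det * (star V).det = 1 := by
    rw [← Matrix.det_mul, hV1, Matrix.det_one]
  refine ⟨l, hlpos, ?_, ?_, ?_⟩
  · intro ε
    set E := (1 - ε) • (1 : Matrix (Fin N) (Fin N) ℝ) + ε • C with hEdef
    have hE : (1 - ε) • A + ε • B = S * E * S := by
      rw [hEdef, Matrix.mul_add, Matrix.add_mul, Matrix.mul_smul, Matrix.smul_mul,
        Matrix.mul_smul, Matrix.smul_mul, Matrix.mul_one, hSS, hSCS]
    have hEdiag : star V * E * V = Matrix.diagonal (fun k => (1 - ε) + ε * l k) := by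
      rw [hEdef, Matrix.mul_add, Matrix.add_mul, Matrix.mul_smul, Matrix.smul_mul,
        Matrix.mul_smul, Matrix.smul_mul, Matrix.mul_one, hV2, hdiag]
      ext p q
      by_cases h : p = q <;>
        simp [Matrix.diagonal_apply, Matrix.one_apply, h, mul_comm]
    have hdetE : E.det = ∏ k, ((1 - ε) + ε * l k) := by
      have h1 : (star V * E * V).det = E.det := by
        rw [Matrix.det_mul, Matrix.det_mul]
        calc (star V).det * E.det * V.det = E.det * (V.det * (star V).det) := by ring
          _ = E.det := by rw [hdVV, mul_one]
      rw [← h1, hEdiag, Matrix.det_diagonal]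
    rw [hE, Matrix.det_mul, Matrix.det_mul, hdetE]
    calc S.det * (∏ k, ((1 - ε) + ε * l k)) * S.det
        = (S.det * S.det) * ∏ k, ((1 - ε) + ε * l k) := by ring
      _ = A.det * ∏ k, ((1 - ε) + ε * l k) := by rw [← Matrix.det_mul, hSS]
  · have hdetC : C.det = ∏ k, l k := by
      have := hCH.det_eq_prod_eigenvalues
      simpa using this
    rw [← hSCS, Matrix.det_mul, Matrix.det_mul, hdetC]
    calc S.det * (∏ k, l k) * S.det = (S.det * S.det) * ∏ k, l k := by ring
      _ = A.det * ∏ k, l k := by rw [← Matrix.det_mul, hSS]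
  · intro i j
    set M := C - 1 with hMdef
    have hMH : M.IsHermitian := hCH.sub Matrix.isHermitian_one
    have hMsym : ∀ p q, M q p = M p q := fun p q => by
      have := hMH.apply q p
      simpa using this.symm
    have hMdiag : star V * M * V = Matrix.diagonal (fun k => l k - 1) := by
      rw [hMdef, Matrix.mul_sub, Matrix.sub_mul, Matrix.mul_one, hV2, hdiag]
      ext p q
      by_cases h : p = q <;> simp [Matrix.diagonal_apply, Matrix.one_apply, h]
    have hM : M = V * Matrix.diagonal (fun k => l k - 1) * star V := by
      rw [← hMdiag]
      calc M = (V * star V) * M * (V * star V) := by rw [hV1, Matrix.one_mul, Matrix.mul_one]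
        _ = V * (star V * M * V) * star V := by
            simp only [Matrix.mul_assoc]
    have hMM : M * M = V * Matrix.diagonal (fun k => (l k - 1) * (l k - 1)) * star V := by
      rw [hM, ← Matrix.diagonal_mul_diagonal]
      calc (V * Matrix.diagonal (fun k => l k - 1) * star V) *
            (V * Matrix.diagonal (fun k => l k - 1) * star V)
          = V * Matrix.diagonal (fun k => l k - 1) * (star V * V)
              * Matrix.diagonal (fun k => l k - 1) * star V := by
            simp only [Matrix.mul_assoc]
        _ = V * (Matrix.diagonal (fun k => l k - 1) * Matrix.diagonal (fun k => l k - 1))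
              * star V := by rw [hV2, Matrix.mul_one]; simp only [Matrix.mul_assoc]
    have htr : ∑ p, ∑ q, (M p q) ^ 2 = ∑ k, (l k - 1) ^ 2 := by
      have h1 : (M * M).trace = ∑ p, ∑ q, (M p q) ^ 2 := by
        rw [Matrix.trace]
        simp only [Matrix.diag_apply, Matrix.mul_apply]
        refine Finset.sum_congr rfl fun p _ => Finset.sum_congr rfl fun q _ => ?_
        rw [hMsym p q, sq]
      have h2 : (M * M).trace = ∑ k, (l k - 1) ^ 2 := by
        rw [hMM, Matrix.trace_mul_cycle, hV2, Matrix.one_mul, Matrix.trace_diagonal]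
        exact Finset.sum_congr rfl fun k _ => (sq _).symm
      rw [← h1, h2]
    have hSMS : S * M * S = B - A := by
      rw [hMdef, Matrix.mul_sub, Matrix.sub_mul, Matrix.mul_one, hSS, hSCS]
    have hSsym : ∀ p q, S q p = S p q := fun p q => by
      have := hSH.apply q p
      simpa using this.symm
    have hentry : B i j - A i j = ∑ x : Fin N × Fin N, M x.1 x.2 * (S i x.1 * S x.2 j) := by
      have h0 : B i j - A i j = (S * M * S) i j := by rw [hSMS, Matrix.sub_apply]
      rw [h0, Fintype.sum_prod_type]
      calc (S * M * S) i j = ∑ q, ∑ p, S i p * M p q * S q j := by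
            simp [Matrix.mul_apply, Finset.sum_mul]
        _ = ∑ p, ∑ q, M p q * (S i p * S q j) := by
            rw [Finset.sum_comm]
            exact Finset.sum_congr rfl fun p _ => Finset.sum_congr rfl fun q _ => by ring
    have hCS := Finset.sum_mul_sq_le_sq_mul_sq Finset.univ
      (fun x : Fin N × Fin N => M x.1 x.2) (fun x : Fin N × Fin N => S i x.1 * S x.2 j)
    have hAii : ∑ p, (S i p) ^ 2 = A i i := by
      rw [← hSS, Matrix.mul_apply]
      exact Finset.sum_congr rfl fun p _ => by rw [hSsym p i, sq]
    have hAjj : ∑ q, (S q j) ^ 2 = A j j := by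
      rw [← hSS, Matrix.mul_apply]
      exact Finset.sum_congr rfl fun q _ => by rw [hSsym q j, sq]
    have hg : ∑ x : Fin N × Fin N, (S i x.1 * S x.2 j) ^ 2 = A i i * A j j := by
      rw [Fintype.sum_prod_type, ← hAii, ← hAjj, Finset.sum_mul_sum]
      exact Finset.sum_congr rfl fun p _ => Finset.sum_congr rfl fun q _ => (mul_pow _ _ _)
    have hf : ∑ x : Fin N × Fin N, (M x.1 x.2) ^ 2 = ∑ k, (l k - 1) ^ 2 := by
      rw [Fintype.sum_prod_type]
      exact htr
    have hsq : (A i j - B i j) ^ 2 = (B i j - A i j) ^ 2 := by ring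
    rw [hsq, hentry]
    rw [hf, hg] at hCS
    exact hCS


lemma convex_pos {a ε : ℝ} (ha : 0 < a) (h0 : 0 ≤ ε) (h1 : ε ≤ 1) :
    0 < 1 - ε + ε * a := by
  rcases le_total a 1 with h | h
  · nlinarith
  · nlinarith

set_option maxHeartbeats 1000000 in
/-- Strong concavity of `log det`: there is a universal constant `c > 0` such that
if positive definite `Σ₁, Σ₂` satisfy
`|(Σ₁)_{ij} - (Σ₂)_{ij}| ≥ δ ((Σ₁)_{ii}+(Σ₁)_{jj}+(Σ₂)_{ii}+(Σ₂)_{jj})` for some `i, j`,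
then `log det ((1-ε)Σ₁ + εΣ₂) ≥ (1-ε) log det Σ₁ + ε log det Σ₂ + c ε (1-ε) δ²`
for all `ε ∈ [0,1]`. -/
theorem logdet_strong_concave :
    ∃ c : ℝ, 0 < c ∧
      ∀ (N : ℕ) (S₁ S₂ : Matrix (Fin N) (Fin N) ℝ),
        S₁.PosDef → S₂.PosDef →
        ∀ (i j : Fin N) (δ : ℝ), 0 < δ →
          δ * (S₁ i i + S₁ j j + S₂ i i + S₂ j j) ≤ |S₁ i j - S₂ i j| →
          ∀ ε : ℝ, 0 ≤ ε → ε ≤ 1 →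
            Real.log ((1 - ε) • S₁ + ε • S₂).det ≥
              (1 - ε) * Real.log S₁.det + ε * Real.log S₂.det
                + c * ε * (1 - ε) * δ ^ 2 := by
  refine ⟨1/2, by norm_num, ?_⟩
  intro N A B hA hB i j δ hδ hup ε hε0 hε1
  obtain ⟨l, hlpos, hdet1, hdet2, hCS⟩ := whitening hA hB
  set F := ∑ k, (l k - 1) ^ 2 with hFdef
  have hAi := posdef_diag_pos hA i
  have hAj := posdef_diag_pos hA j
  have hBi := posdef_diag_pos hB i
  have hBj := posdef_diag_pos hB j
  have hdetA : 0 < A.det := hA.det_pos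
  set T := A i i + A j j + B i i + B j j with hTdef
  have hT : 0 < T := by rw [hTdef]; linarith
  have hEA := posdef_entry_sq hA i j
  have hEB := posdef_entry_sq hB i j
  -- δ ≤ 1/2
  have habsA : |A i j| ≤ (A i i + A j j) / 2 := by
    nlinarith [sq_abs (A i j), abs_nonneg (A i j), sq_nonneg (A i i - A j j)]
  have habsB : |B i j| ≤ (B i i + B j j) / 2 := by
    nlinarith [sq_abs (B i j), abs_nonneg (B i j), sq_nonneg (B i i - B j j)]
  have htri : |A i j - B i j| ≤ |A i j| + |B i j| := by
    calc |A i j - B i j| = |A i j + -(B i j)| := by rw [sub_eq_add_neg]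
      _ ≤ |A i j| + |-(B i j)| := abs_add_le _ _
      _ = |A i j| + |B i j| := by rw [abs_neg]
  have hδhalf : δ ≤ 1 / 2 := by nlinarith
  -- 4δ² ≤ F
  have h1 : (δ * T) ^ 2 ≤ (A i j - B i j) ^ 2 := by
    have h2 : (δ * T) ^ 2 ≤ |A i j - B i j| ^ 2 :=
      pow_le_pow_left₀ (mul_nonneg hδ.le hT.le) hup 2
    rwa [sq_abs] at h2
  have hT2 : 4 * (A i i * A j j) ≤ T ^ 2 := by
    rw [hTdef]; nlinarith [sq_nonneg (A i i - A j j)]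
  have hFδ : 4 * δ ^ 2 ≤ F := by
    have h3 := hCS i j
    have h4 : δ ^ 2 * (4 * (A i i * A j j)) ≤ δ ^ 2 * T ^ 2 :=
      mul_le_mul_of_nonneg_left hT2 (sq_nonneg δ)
    have h5 : 4 * δ ^ 2 * (A i i * A j j) ≤ F * (A i i * A j j) := by
      have e : (δ * T) ^ 2 = δ ^ 2 * T ^ 2 := by ring
      have e2 : δ ^ 2 * (4 * (A i i * A j j)) = 4 * δ ^ 2 * (A i i * A j j) := by ring
      linarith [h1, h3, h4]
    exact le_of_mul_le_mul_right h5 (mul_pos hAi hAj)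
  have hF1 : 4 * δ ^ 2 ≤ 1 := by nlinarith
  have hminsum : 4 * δ ^ 2 ≤ ∑ k, min ((l k - 1) ^ 2) 1 := by
    have h5 := min_sum_le (t := fun k => (l k - 1) ^ 2) (fun k => sq_nonneg _)
    calc 4 * δ ^ 2 ≤ min F 1 := le_min hFδ hF1
      _ ≤ _ := h5
  -- logs
  have hfack : ∀ k, 0 < (1 - ε) + ε * l k := fun k => convex_pos (hlpos k) hε0 hε1
  have hprodpos : 0 < ∏ k, ((1 - ε) + ε * l k) :=
    Finset.prod_pos fun k _ => hfack k
  have hlpos' : 0 < ∏ k, l k := Finset.prod_pos fun k _ => hlpos k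
  have hlogLHS : Real.log ((1 - ε) • A + ε • B).det
      = Real.log A.det + ∑ k, Real.log ((1 - ε) + ε * l k) := by
    rw [hdet1 ε, Real.log_mul hdetA.ne' hprodpos.ne',
      Real.log_prod fun k _ => (hfack k).ne']
  have hlogB : Real.log B.det = Real.log A.det + ∑ k, Real.log (l k) := by
    rw [hdet2, Real.log_mul hdetA.ne' hlpos'.ne',
      Real.log_prod fun k _ => (hlpos k).ne']
  have hsum : ∑ k, (ε * Real.log (l k) + (1/8) * (ε * (1 - ε) * min ((l k - 1) ^ 2) 1))
      ≤ ∑ k, Real.log ((1 - ε) + ε * l k) := by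
    refine Finset.sum_le_sum fun k _ => ?_
    have h6 := log_gap_min (hlpos k) hε0 hε1
    calc ε * Real.log (l k) + (1/8) * (ε * (1 - ε) * min ((l k - 1) ^ 2) 1) ≤
        Real.log ((1 - ε) * 1 + ε * l k) := h6
      _ = Real.log ((1 - ε) + ε * l k) := by rw [mul_one]
  have e1 : ∑ k, (ε * Real.log (l k) + (1/8) * (ε * (1 - ε) * min ((l k - 1) ^ 2) 1))
      = ε * (∑ k, Real.log (l k))
        + (1/8) * (ε * (1 - ε)) * (∑ k, min ((l k - 1) ^ 2) 1) := by
    rw [Finset.sum_add_distrib, ← Finset.mul_sum, ← Finset.mul_sum]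
    congr 1
    rw [← Finset.mul_sum]
    ring
  have hεε : 0 ≤ ε * (1 - ε) := mul_nonneg hε0 (by linarith)
  have hfin : (1/8) * (ε * (1 - ε)) * (4 * δ ^ 2)
      ≤ (1/8) * (ε * (1 - ε)) * (∑ k, min ((l k - 1) ^ 2) 1) :=
    mul_le_mul_of_nonneg_left hminsum (by positivity)
  rw [ge_iff_le, hlogLHS, hlogB]
  rw [e1] at hsum
  nlinarith [hsum, hfin]
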